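/- Let G = HNN(H, H₀, θ) with 1 < [H : H₀] < ∞ and 1 < [H : θ(H₀)] < ∞, and suppose there exist a ∈ H \ H₀ centralizing H₀ and b ∈ H \ θ(H₀) centralizing θ(H₀). Define H₀^{(0)} = H₀ and H₀^{(n+1)} = H₀ ∩ θ(H₀^{(n)}), and assume ⋂_{n ≥ 0} θ^{-n}(H₀^{(n)}) = {e}. Then the end ξ of the Bass–Serre tree T represented by the ray through the vertices btH, btat^{-1}H, btat^{-2}H, btat^{-3}H, btat^{-3}btH, … (i.e., determined by the infinite product ∏_{i=1}^∞ (btat^{-1})(t^{-2})^i) has trivial stabilizer in G. -/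

import Mathlib

open HNNExtension

section Defs

variable {G : Type*} [Group G]

/-- The `n`-th step (edge crossing) of the ray `b t, a t⁻¹, t⁻¹, t⁻¹, a t⁻¹ ... ` determined
by the infinite product `∏_{i ≥ I} (b t a t⁻¹)(t⁻²)^i`, where `x = b t`, `y = a t⁻¹` and
`z = t⁻¹`: block `i` consists of the steps `x, y, z, z, …, z` with `2i` copies of `z`. -/
def rayStepAux (x y z : G) : ℕ → ℕ → G
  | i, n =>
    if n = 0 then x
    else if n = 1 then y
    else if n < 2 * i + 2 then z
    else rayStepAux x y z (i + 1) (n - (2 * i + 2))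
  termination_by _ n => n
  decreasing_by omega

/-- The group element whose coset is the `n`-th vertex of the ray determined by the
infinite product `∏_{i=1}^∞ (b t a t⁻¹)(t⁻²)^i` (with `x = b t`, `y = a t⁻¹`, `z = t⁻¹`). -/
def rayProd (x y z : G) (n : ℕ) : G :=
  ((List.range n).map (rayStepAux x y z 1)).prod

end Defs

section Chain

variable {H : Type*} [Group H] {A B : Subgroup H} (φ : A ≃* B)

/-- The preimage `θ⁻¹(C) ⊆ H₀` of a subset `C ⊆ H` under `θ = φ : H₀ → H`. -/
def thetaInv (C : Set H) : Set H :=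
  {h : H | ∃ hh : h ∈ A, (φ ⟨h, hh⟩ : H) ∈ C}

/-- The chain `H₀^{(0)} = H₀`, `H₀^{(n+1)} = H₀ ∩ θ(H₀^{(n)})`. -/
def hnnChain : ℕ → Set H
  | 0 => (A : Set H)
  | n + 1 => (A : Set H) ∩ {h : H | ∃ x : A, (x : H) ∈ hnnChain n ∧ (φ x : H) = h}

end Chain

/-! ### Auxiliary combinatorics: the symbolic step sequence -/

/-- Symbolic code of the ray steps: `0` for `x = bt`, `1` for `y = at⁻¹`, `2` for `z = t⁻¹`. -/
def StmtSix.raySig : ℕ → ℕ → ℕ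
  | i, n =>
    if n = 0 then 0
    else if n = 1 then 1
    else if n < 2 * i + 2 then 2
    else StmtSix.raySig (i + 1) (n - (2 * i + 2))
  termination_by _ n => n
  decreasing_by omega

namespace StmtSix

set_option linter.unusedSectionVars false

lemma rayStepAux_eq_code {G : Type*} [Group G] (x y z : G) (i n : ℕ) :
    rayStepAux x y z i n = if raySig i n = 0 then x else if raySig i n = 1 then y else z := by
  induction n using Nat.strong_induction_on generalizing i with
  | _ n ih =>
    rw [rayStepAux, raySig]
    by_cases h1 : n = 0
    · simp [h1]
    · by_cases h2 : n = 1
      · simp [h1, h2]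
      · by_cases h3 : n < 2 * i + 2
        · simp [h1, h2, h3]
        · simp only [if_neg h1, if_neg h2, if_neg h3]
          exact ih _ (by omega) _

lemma raySig_zero_iff (i n : ℕ) : raySig i n = 0 ↔ ∃ k, n = k * k + (2 * i + 1) * k := by
  induction n using Nat.strong_induction_on generalizing i with
  | _ n ih =>
    rw [raySig]
    by_cases h1 : n = 0
    · simp only [if_pos h1, eq_self_iff_true, true_iff]
      exact ⟨0, by simp [h1]⟩
    · by_cases h2 : n = 1
      · simp only [if_neg h1, if_pos h2, if_neg]
        constructor
        · intro h; exact absurd h one_ne_zero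
        · rintro ⟨k, hk⟩
          rcases Nat.eq_zero_or_pos k with rfl | hkp
          · simp at hk; omega
          · nlinarith
      · by_cases h3 : n < 2 * i + 2
        · simp only [if_neg h1, if_neg h2, if_pos h3]
          constructor
          · intro h; exact absurd h (by norm_num)
          · rintro ⟨k, hk⟩
            rcases Nat.eq_zero_or_pos k with rfl | hkp
            · simp at hk; omega
            · nlinarith
        · simp only [if_neg h1, if_neg h2, if_neg h3]
          obtain ⟨m, rfl⟩ : ∃ m, n = m + (2 * i + 2) := ⟨n - (2 * i + 2), by omega⟩
          rw [Nat.add_sub_cancel, ih m (by omega) (i + 1)]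
          constructor
          · rintro ⟨k, hk⟩
            exact ⟨k + 1, by rw [hk]; ring⟩
          · rintro ⟨k, hk⟩
            rcases Nat.eq_zero_or_pos k with rfl | hkp
            · omega
            · obtain ⟨k', rfl⟩ : ∃ k', k = k' + 1 := ⟨k - 1, by omega⟩
              exact ⟨k', Nat.add_right_cancel
                (by rw [hk]; ring :
                  m + (2 * i + 2) = (k' * k' + (2 * (i + 1) + 1) * k') + (2 * i + 2))⟩

/-! ### Counting the backward steps and the exponent sequence -/

noncomputable def myBc (N m : ℕ) : ℕ :=
  ((Finset.range m).filter (fun j => raySig 1 (N + j) = 0)).card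

noncomputable def myeI (N m : ℕ) : ℤ := (m : ℤ) - 2 * myBc N m

lemma myeI_step (N m : ℕ) :
    myeI N (m + 1) = if raySig 1 (N + m) = 0 then myeI N m - 1 else myeI N m + 1 := by
  unfold myeI myBc
  rw [Finset.range_add_one, Finset.filter_insert]
  by_cases h : raySig 1 (N + m) = 0
  · rw [if_pos h, if_pos h, Finset.card_insert_of_notMem (by simp)]
    push_cast
    ring
  · rw [if_neg h, if_neg h]
    push_cast
    ring

lemma myBc_le (N m : ℕ) : myBc N m ≤ Nat.sqrt (N + m) + 1 := by
  unfold myBc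
  calc ((Finset.range m).filter (fun j => raySig 1 (N + j) = 0)).card
      ≤ ((Finset.range (Nat.sqrt (N + m) + 1)).image (fun k => k * k + 3 * k - N)).card := by
        apply Finset.card_le_card
        intro j hj
        rw [Finset.mem_filter, Finset.mem_range] at hj
        obtain ⟨hjm, hsig⟩ := hj
        obtain ⟨k, hk⟩ := (raySig_zero_iff 1 (N + j)).mp hsig
        have hk3 : k * k + 3 * k = N + j := by omega
        have hkle : k ≤ Nat.sqrt (N + m) := by
          rw [Nat.le_sqrt]
          nlinarith
        rw [Finset.mem_image]
        exact ⟨k, Finset.mem_range.mpr (by omega), by omega⟩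
    _ ≤ (Finset.range (Nat.sqrt (N + m) + 1)).card := Finset.card_image_le
    _ = Nat.sqrt (N + m) + 1 := Finset.card_range _

lemma myeI_tendsto (N : ℕ) (L : ℤ) : ∃ M : ℕ, ∀ j ≥ M, L < myeI N j := by
  set Ln := L.toNat with hLn
  refine ⟨(2 * N + Ln + 9) * (2 * N + Ln + 9), fun j hj => ?_⟩
  set s := Nat.sqrt j with hs
  have hsge : 2 * N + Ln + 9 ≤ s := by
    rw [hs]
    calc 2 * N + Ln + 9 = Nat.sqrt ((2 * N + Ln + 9) * (2 * N + Ln + 9)) :=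
          (Nat.sqrt_eq _).symm
      _ ≤ Nat.sqrt j := Nat.sqrt_le_sqrt hj
  have hjs : s * s ≤ j := Nat.sqrt_le j
  have hsqNj : Nat.sqrt (N + j) ≤ N + s + 1 := by
    calc Nat.sqrt (N + j) ≤ Nat.sqrt ((N + s + 1) * (N + s + 1)) := by
          apply Nat.sqrt_le_sqrt
          have := Nat.lt_succ_sqrt j
          nlinarith
      _ = N + s + 1 := Nat.sqrt_eq _
  have hBc : myBc N j ≤ N + s + 2 := le_trans (myBc_le N j) (by omega)
  have hL : L ≤ (Ln : ℤ) := Int.self_le_toNat L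
  unfold myeI
  have h1 : (myBc N j : ℤ) ≤ (N : ℤ) + s + 2 := by exact_mod_cast hBc
  have h2 : ((s : ℤ)) * s ≤ (j : ℤ) := by exact_mod_cast hjs
  have h3 : (2 * (N : ℤ) + Ln + 9) ≤ (s : ℤ) := by exact_mod_cast hsge
  nlinarith

/-! ### The chain and the `good` predicate -/

section ChainAux

variable {H : Type*} [Group H] {A B : Subgroup H} (φ : A ≃* B)

/-- `good k h` says that `h, φ h, φ² h, …, φ^k h` are defined (each iterate staying in the
domain `A`). -/
def good : ℕ → H → Prop
  | 0, h => h ∈ A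
  | k + 1, h => ∃ hh : h ∈ A, good k (φ ⟨h, hh⟩ : H)

lemma thetaInv_inter (C D : Set H) :
    thetaInv φ (C ∩ D) = thetaInv φ C ∩ thetaInv φ D := by
  ext h
  constructor
  · rintro ⟨hh, h1, h2⟩; exact ⟨⟨hh, h1⟩, ⟨hh, h2⟩⟩
  · rintro ⟨⟨hh, h1⟩, ⟨hh', h2⟩⟩; exact ⟨hh, h1, h2⟩

lemma thetaInv_iter_inter (k : ℕ) (C D : Set H) :
    (thetaInv φ)^[k] (C ∩ D) = (thetaInv φ)^[k] C ∩ (thetaInv φ)^[k] D := by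
  induction k generalizing C D with
  | zero => rfl
  | succ k ih => rw [Function.iterate_succ_apply, Function.iterate_succ_apply,
      Function.iterate_succ_apply, thetaInv_inter, ih]

lemma thetaInv_chain_succ (k : ℕ) :
    thetaInv φ (hnnChain φ (k + 1)) = hnnChain φ k ∩ thetaInv φ (A : Set H) := by
  ext h
  constructor
  · rintro ⟨hh, hA, x, hx, hfx⟩
    have hx' : x = ⟨h, hh⟩ := φ.injective (Subtype.ext hfx)
    subst hx'
    exact ⟨hx, hh, hA⟩
  · rintro ⟨hck, hh, hA⟩
    exact ⟨hh, hA, ⟨h, hh⟩, hck, rfl⟩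

lemma chainE_succ (k : ℕ) :
    (thetaInv φ)^[k + 1] (hnnChain φ (k + 1)) =
      (thetaInv φ)^[k] (hnnChain φ k) ∩ (thetaInv φ)^[k + 1] (A : Set H) := by
  rw [Function.iterate_succ_apply, thetaInv_chain_succ, thetaInv_iter_inter,
    ← Function.iterate_succ_apply]

lemma good_mem_iterA (k : ℕ) (h : H) (hg : good φ k h) :
    h ∈ (thetaInv φ)^[k] (A : Set H) := by
  induction k generalizing h with
  | zero => exact hg
  | succ k ih =>
    obtain ⟨hh, hg'⟩ := hg
    rw [Function.iterate_succ_apply']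
    exact ⟨hh, ih _ hg'⟩

lemma good_mem_E (k : ℕ) (h : H) (hg : ∀ j, good φ j h) :
    h ∈ (thetaInv φ)^[k] (hnnChain φ k) := by
  induction k with
  | zero => exact hg 0
  | succ k ih => exact (chainE_succ φ k) ▸ ⟨ih, good_mem_iterA φ (k + 1) h (hg (k + 1))⟩

/-! ### The abstract dynamics argument -/

variable (c : ℕ → H) (flag : ℕ → Bool) (eI : ℕ → ℤ)
  (hFwd : ∀ m, flag m = false → ∃ h : c m ∈ A, c (m + 1) = (φ ⟨c m, h⟩ : H))
  (hBwd : ∀ m, flag m = true → ∃ h : c (m + 1) ∈ A, c m = (φ ⟨c (m + 1), h⟩ : H))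
  (hstep : ∀ m, eI (m + 1) = if flag m then eI m - 1 else eI m + 1)
  (htend : ∀ L : ℤ, ∃ M : ℕ, ∀ j ≥ M, L < eI j)

include hFwd hBwd hstep

lemma tele : ∀ n m m', m' = m + n → (∀ j, m ≤ j → j ≤ m' → eI m ≤ eI j) →
    eI m' = eI m → c m' = c m := by
  intro n
  induction n using Nat.strong_induction_on with
  | _ n ih =>
  rintro m m' rfl hwin heq
  by_cases hex : ∃ j, m < j ∧ j < m + n ∧ eI j = eI m
  · obtain ⟨j, hj1, hj2, hj3⟩ := hex
    have e1 : c j = c m :=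
      ih (j - m) (by omega) m j (by omega) (fun i h1 h2 => hwin i h1 (by omega)) hj3
    have e2 : c (m + n) = c j :=
      ih (m + n - j) (by omega) j (m + n) (by omega)
        (fun i h1 h2 => hj3 ▸ hwin i (by omega) h2) (by rw [heq, hj3])
    rw [e2, e1]
  · rcases Nat.eq_zero_or_pos n with rfl | hn
    · rfl
    have hn1 : n ≠ 1 := by
      rintro rfl
      have h1 := hstep m
      split at h1 <;> omega
    obtain ⟨p, rfl⟩ : ∃ p, n = p + 2 := ⟨n - 2, by omega⟩
    have hflagm : flag m = false := by
      cases hfm : flag m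
      · rfl
      · exfalso
        have h1 := hstep m
        rw [hfm] at h1
        have h2 := hwin (m + 1) (by omega) (by omega)
        simp at h1
        omega
    obtain ⟨hmemm, hcm⟩ := hFwd m hflagm
    have heIm1 : eI (m + 1) = eI m + 1 := by
      have h1 := hstep m; rw [hflagm] at h1; simpa using h1
    have hint : ∀ j, m < j → j < m + (p + 2) → eI m + 1 ≤ eI j := by
      intro j h1 h2
      have h3 := hwin j (by omega) (by omega)
      have h4 : eI j ≠ eI m := fun hje => hex ⟨j, h1, h2, hje⟩
      omega
    have hlast : eI (m + p + 1) = eI m + 1 := by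
      have h1 : eI m + 1 ≤ eI (m + p + 1) := hint _ (by omega) (by omega)
      have h2 := hstep (m + p + 1)
      have h3 : m + p + 1 + 1 = m + (p + 2) := by omega
      rw [h3, heq] at h2
      split at h2 <;> omega
    have hflaglast : flag (m + p + 1) = true := by
      cases h : flag (m + p + 1)
      · exfalso
        have h2 := hstep (m + p + 1)
        rw [h] at h2
        have h3 : m + p + 1 + 1 = m + (p + 2) := by omega
        rw [h3, heq] at h2
        simp at h2
        omega
      · rfl
    obtain ⟨hmem', hc'⟩ := hBwd (m + p + 1) hflaglast
    have hmid : c (m + p + 1) = c (m + 1) := by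
      refine ih p (by omega) (m + 1) (m + p + 1) (by omega) ?_ (by rw [hlast, heIm1])
      intro i h1 h2
      rw [heIm1]
      exact hint i (by omega) (by omega)
    have h3 : m + p + 1 + 1 = m + (p + 2) := by omega
    have key : c (m + p + 1 + 1) = c m := by
      have hsub : (⟨c (m + p + 1 + 1), hmem'⟩ : A) = ⟨c m, hmemm⟩ := by
        apply φ.injective
        apply Subtype.ext
        show (φ _ : H) = (φ _ : H)
        rw [← hc', hmid, ← hcm]
      exact congrArg Subtype.val hsub
    rw [← h3, key]

include htend

lemma claim : ∀ k m, (∀ j, m ≤ j → eI m ≤ eI j) → good φ k (c m) := by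
  intro k
  induction k with
  | zero =>
    intro m hrm
    have hflagm : flag m = false := by
      cases hfm : flag m
      · rfl
      · exfalso
        have h1 := hstep m
        rw [hfm] at h1
        have h2 := hrm (m + 1) (by omega)
        simp at h1
        omega
    exact (hFwd m hflagm).1
  | succ k ih =>
    intro m hrm
    obtain ⟨M, hM⟩ := htend (eI m)
    have hmM : m < M := by
      by_contra h
      exact absurd (hM m (by omega)) (lt_irrefl _)
    set S : Finset ℕ := (Finset.range M).filter (fun j => m ≤ j ∧ eI j = eI m) with hS
    have hmS : m ∈ S := by simp [hS, hmM]
    set m3 := S.max' ⟨m, hmS⟩ with hm3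
    have hm3S : m3 ∈ S := S.max'_mem _
    have hm3m : m ≤ m3 := (Finset.mem_filter.mp hm3S).2.1
    have hm3eq : eI m3 = eI m := (Finset.mem_filter.mp hm3S).2.2
    have hgt : ∀ j, m3 < j → eI m + 1 ≤ eI j := by
      intro j hj
      have h1 : eI m ≤ eI j := hrm j (by omega)
      have h2 : eI j ≠ eI m := by
        intro hje
        have hjM : j < M := by
          by_contra h
          exact absurd (hM j (by omega)) (by omega)
        have : j ∈ S := by simp [hS, hjM, hje]; omega
        exact absurd (S.le_max' j this) (by omega)
      omega
    have hflag3 : flag m3 = false := by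
      cases h : flag m3
      · rfl
      · exfalso
        have h1 := hstep m3
        rw [h] at h1
        have h2 := hgt (m3 + 1) (by omega)
        simp at h1
        omega
    obtain ⟨hm3A, hc3⟩ := hFwd m3 hflag3
    have heI3 : eI (m3 + 1) = eI m + 1 := by
      have h1 := hstep m3; rw [hflag3] at h1; simp at h1; omega
    have hG : good φ k (c (m3 + 1)) := by
      refine ih (m3 + 1) ?_
      intro j hj
      rw [heI3]
      exact hgt j (by omega)
    have hceq : c m3 = c m :=
      tele φ c flag eI hFwd hBwd hstep (m3 - m) m m3 (by omega)
        (fun j h1 _ => hrm j h1) hm3eq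
    have hflagm : flag m = false := by
      cases hfm : flag m
      · rfl
      · exfalso
        have h1 := hstep m
        rw [hfm] at h1
        have h2 := hrm (m + 1) (by omega)
        simp at h1
        omega
    obtain ⟨hmem, _⟩ := hFwd m hflagm
    have hsub : (⟨c m3, hm3A⟩ : A) = ⟨c m, hmem⟩ := Subtype.ext hceq
    rw [hc3, hsub] at hG
    exact ⟨hmem, hG⟩

lemma exists_all_good : ∃ m, ∀ k, good φ k (c m) := by
  obtain ⟨M0, hM0⟩ := htend (eI 0)
  obtain ⟨m1, hm1mem, hmin⟩ :=
    (Finset.range (M0 + 1)).exists_min_image eI ⟨0, by simp⟩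
  refine ⟨m1, fun k => claim φ c flag eI hFwd hBwd hstep htend k m1 ?_⟩
  intro j _
  by_cases hj : j < M0 + 1
  · exact hmin j (Finset.mem_range.mpr hj)
  · calc eI m1 ≤ eI 0 := hmin 0 (by simp)
      _ ≤ eI j := le_of_lt (hM0 j (by omega))

end ChainAux

/-! ### Britton's lemma consequences -/

section Britton

variable {H : Type*} [Group H] {A B : Subgroup H} (φ : A ≃* B)

lemma tt_not_mem (u : H) :
    t * of u * t ∉ ((of : H →* HNNExtension H A B φ).range) := by
  intro hmem
  have h := ReducedWord.toList_eq_nil_of_mem_of_range φ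
    ⟨1, [(1, u), (1, 1)], List.isChain_pair.2 fun _ => rfl⟩ ?_
  · simp at h
  · convert hmem using 1
    simp [NormalWord.ReducedWord.prod, mul_assoc]

lemma tinv_tinv_not_mem (u : H) :
    t⁻¹ * of u * t⁻¹ ∉ ((of : H →* HNNExtension H A B φ).range) := by
  intro hmem
  have h := ReducedWord.toList_eq_nil_of_mem_of_range φ
    ⟨1, [(-1, u), (-1, 1)], List.isChain_pair.2 fun _ => rfl⟩ ?_
  · simp at h
  · convert hmem using 1
    simp [NormalWord.ReducedWord.prod, mul_assoc]

lemma t_conj_mem (u : H)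
    (hmem : t * of u * t⁻¹ ∈ ((of : H →* HNNExtension H A B φ).range)) : u ∈ A := by
  by_contra hu
  have h := ReducedWord.toList_eq_nil_of_mem_of_range φ
    ⟨1, [(1, u), (-1, 1)], List.isChain_pair.2 fun hx => absurd (by simpa using hx) hu⟩ ?_
  · simp at h
  · convert hmem using 1
    simp [NormalWord.ReducedWord.prod, mul_assoc]

lemma tinv_conj_mem (u : H)
    (hmem : t⁻¹ * of u * t ∈ ((of : H →* HNNExtension H A B φ).range)) : u ∈ B := by
  by_contra hu
  have h := ReducedWord.toList_eq_nil_of_mem_of_range φ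
    ⟨1, [(-1, u), (1, 1)], List.isChain_pair.2 fun hx => absurd (by simpa using hx) hu⟩ ?_
  · simp at h
  · convert hmem using 1
    simp [NormalWord.ReducedWord.prod, mul_assoc]

end Britton

/-! ### The main auxiliary theorem: one translation direction -/

theorem main_aux {H : Type*} [Group H] (A B : Subgroup H) (φ : A ≃* B)
    (a : H) (hacen : ∀ h ∈ A, a * h = h * a)
    (b : H) (hbcen : ∀ h ∈ B, b * h = h * b)
    (hchain : (⋂ n : ℕ, (thetaInv φ)^[n] (hnnChain φ n)) = {1})
    (g : HNNExtension H A B φ) (d N : ℕ)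
    (hg : ∀ n ≥ N, g • (QuotientGroup.mk
            (rayProd (of b * t) (of a * t⁻¹) (t : HNNExtension H A B φ)⁻¹ n) :
          HNNExtension H A B φ ⧸ (of : H →* HNNExtension H A B φ).range) =
        QuotientGroup.mk
          (rayProd (of b * t) (of a * t⁻¹) (t : HNNExtension H A B φ)⁻¹ (n + d))) :
    g = 1 := by
  set x : HNNExtension H A B φ := of b * t with hx
  set y : HNNExtension H A B φ := of a * t⁻¹ with hy
  set w : ℕ → HNNExtension H A B φ := rayProd x y t⁻¹ with hwdef
  set s : ℕ → HNNExtension H A B φ := fun n => rayStepAux x y t⁻¹ 1 n with hsdef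
  have hw : ∀ n, w (n + 1) = w n * s n := by
    intro n
    simp only [hwdef, rayProd, List.range_succ, List.map_append, List.prod_append,
      List.map_singleton, List.prod_singleton, hsdef]
  -- extract the coset representatives
  have hc0 : ∀ m : ℕ, ∃ h : H, of h = (w (N + m))⁻¹ * g⁻¹ * w (N + m + d) := by
    intro m
    have h1 := hg (N + m) (by omega)
    have h2 : ((g * w (N + m))⁻¹ * w (N + m + d)) ∈
        ((of : H →* HNNExtension H A B φ).range) := QuotientGroup.eq.mp h1
    obtain ⟨h, hh⟩ := h2
    exact ⟨h, by rw [hh]; group⟩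
  choose c hc using hc0
  have hrec : ∀ m, of (c (m + 1)) = (s (N + m))⁻¹ * of (c m) * s (N + m + d) := by
    intro m
    have h1 := hc (m + 1)
    have e1 : N + (m + 1) = (N + m) + 1 := by omega
    rw [e1] at h1
    have e2 : N + m + 1 + d = (N + m + d) + 1 := by omega
    rw [e2, hw, hw] at h1
    rw [h1, hc m]
    group
  have hscode : ∀ n, s n = if raySig 1 n = 0 then x
      else if raySig 1 n = 1 then y else t⁻¹ := fun n => rayStepAux_eq_code x y t⁻¹ 1 n
  -- first, d = 0
  rcases Nat.eq_zero_or_pos d with hd0 | hdpos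
  swap
  · exfalso
    obtain ⟨n, hn⟩ : ∃ n, n = (N + d) * (N + d) + 3 * (N + d) := ⟨_, rfl⟩
    have hnN : N ≤ n := by
      rw [hn]
      exact le_trans (by omega : N ≤ 3 * (N + d)) (Nat.le_add_left _ _)
    obtain ⟨m, hm⟩ : ∃ m, n = N + m := ⟨n - N, by omega⟩
    have hσn : raySig 1 n = 0 := (raySig_zero_iff 1 n).mpr ⟨N + d, by rw [hn]⟩
    have hsx : s n = x := by rw [hscode, if_pos hσn]
    have h1 := hrec m
    rw [← hm] at h1
    rw [hsx] at h1
    by_cases h0 : raySig 1 (n + d) = 0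
    · obtain ⟨k', hk'⟩ := (raySig_zero_iff 1 (n + d)).mp h0
      have hk'3 : n + d = k' * k' + 3 * k' := by rw [hk']
      have hk'gt : N + d < k' := by
        by_contra hle
        push_neg at hle
        have hmul : k' * k' ≤ (N + d) * (N + d) := Nat.mul_le_mul hle hle
        rw [hn] at hk'3
        linarith
      have h7 : N + d + 1 ≤ k' := hk'gt
      have h6 : (N + d + 1) * (N + d + 1) + 3 * (N + d + 1) ≤ k' * k' + 3 * k' :=
        Nat.add_le_add (Nat.mul_le_mul h7 h7) (by omega)
      have h8 : (N + d + 1) * (N + d + 1) = (N + d) * (N + d) + 2 * (N + d) + 1 := by ring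
      rw [hn] at hk'3
      linarith
    · have hform : t⁻¹ * (of (b⁻¹ * c m * (if raySig 1 (n + d) = 1 then a else 1))
            : HNNExtension H A B φ) * t⁻¹ =
          of (c (m + 1)) := by
        rw [h1, hscode (n + d), if_neg h0]
        by_cases h1' : raySig 1 (n + d) = 1
        · rw [if_pos h1', if_pos h1', hy, hx]
          simp only [map_mul, map_inv]
          group
        · rw [if_neg h1', if_neg h1', hx]
          simp only [map_mul, map_inv, map_one]
          group
      refine tinv_tinv_not_mem φ (b⁻¹ * c m * (if raySig 1 (n + d) = 1 then a else 1)) ?_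
      rw [hform]
      exact ⟨c (m + 1), rfl⟩
  subst hd0
  -- now the dynamics
  set flag : ℕ → Bool := fun m => decide (raySig 1 (N + m) = 0) with hflagdef
  have hFwd : ∀ m, flag m = false →
      ∃ h : c m ∈ A, c (m + 1) = (φ ⟨c m, h⟩ : H) := by
    intro m hfm
    have hσ : ¬ raySig 1 (N + m) = 0 := by
      simpa [hflagdef] using hfm
    have h1 := hrec m
    simp only [Nat.add_zero] at h1
    have hkey : ∃ u : H, (u = c m) ∧
        of (c (m + 1)) = (t * of u * t⁻¹ : HNNExtension H A B φ) ∧ u ∈ A := by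
      by_cases h1' : raySig 1 (N + m) = 1
      · -- step y
        have hsy : s (N + m) = y := by rw [hscode, if_neg hσ, if_pos h1']
        rw [hsy, hy] at h1
        have hform : of (c (m + 1)) = (t * of (a⁻¹ * c m * a) * t⁻¹ : HNNExtension H A B φ) := by
          rw [h1]
          simp only [map_mul, map_inv]
          group
        have hmemA : a⁻¹ * c m * a ∈ A :=
          t_conj_mem φ _ (by rw [← hform]; exact ⟨c (m + 1), rfl⟩)
        have hfix : a⁻¹ * c m * a = c m := by
          have h2 := hacen _ hmemA
          have h3 : c m * a = (a⁻¹ * c m * a) * a := by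
            rw [← h2]; group
          exact (mul_right_cancel h3).symm
        exact ⟨a⁻¹ * c m * a, hfix, hform, hmemA⟩
      · -- step z
        have hsz : s (N + m) = t⁻¹ := by rw [hscode, if_neg hσ, if_neg h1']
        rw [hsz] at h1
        have hform : of (c (m + 1)) = (t * of (c m) * t⁻¹ : HNNExtension H A B φ) := by
          rw [h1]; group
        have hmemA : c m ∈ A :=
          t_conj_mem φ _ (by rw [← hform]; exact ⟨c (m + 1), rfl⟩)
        exact ⟨c m, rfl, hform, hmemA⟩
    obtain ⟨u, hu1, hu2, hu3⟩ := hkey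
    subst hu1
    refine ⟨hu3, ?_⟩
    apply of_injective (φ := φ)
    rw [hu2, equiv_eq_conj]
  have hBwd : ∀ m, flag m = true →
      ∃ h : c (m + 1) ∈ A, c m = (φ ⟨c (m + 1), h⟩ : H) := by
    intro m hfm
    have hσ : raySig 1 (N + m) = 0 := by
      simpa [hflagdef] using hfm
    have h1 := hrec m
    simp only [Nat.add_zero] at h1
    have hsx : s (N + m) = x := by rw [hscode, if_pos hσ]
    rw [hsx, hx] at h1
    have hform : of (c (m + 1)) = (t⁻¹ * of (b⁻¹ * c m * b) * t : HNNExtension H A B φ) := by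
      rw [h1]
      simp only [map_mul, map_inv]
      group
    have hmemB : b⁻¹ * c m * b ∈ B :=
      tinv_conj_mem φ _ (by rw [← hform]; exact ⟨c (m + 1), rfl⟩)
    have hfix : b⁻¹ * c m * b = c m := by
      have h2 := hbcen _ hmemB
      have h3 : c m * b = (b⁻¹ * c m * b) * b := by
        rw [← h2]; group
      exact (mul_right_cancel h3).symm
    have hmemB' : c m ∈ B := hfix ▸ hmemB
    have hval : c (m + 1) = (φ.symm ⟨c m, hmemB'⟩ : H) := by
      apply of_injective (φ := φ)
      rw [hform, equiv_symm_eq_conj]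
      congr 2
      rw [hfix]
    have hmemA : c (m + 1) ∈ A := by
      rw [hval]; exact (φ.symm ⟨c m, hmemB'⟩).2
    refine ⟨hmemA, ?_⟩
    have : (⟨c (m + 1), hmemA⟩ : A) = φ.symm ⟨c m, hmemB'⟩ := Subtype.ext hval
    rw [this, MulEquiv.apply_symm_apply]
  have hstep : ∀ m, myeI N (m + 1) = if flag m then myeI N m - 1 else myeI N m + 1 := by
    intro m
    rw [myeI_step]
    by_cases h : raySig 1 (N + m) = 0 <;> simp [hflagdef, h]
  obtain ⟨m1, hm1⟩ := exists_all_good φ c flag (myeI N) hFwd hBwd hstep (myeI_tendsto N)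
  have hmemI : c m1 ∈ (⋂ n : ℕ, (thetaInv φ)^[n] (hnnChain φ n)) :=
    Set.mem_iInter.mpr fun n => good_mem_E φ n (c m1) hm1
  rw [hchain] at hmemI
  have hc1 : c m1 = 1 := hmemI
  have h2 := hc m1
  rw [Nat.add_zero, hc1, map_one] at h2
  have h3 : g⁻¹ = 1 := by
    have := h2.symm
    calc g⁻¹ = w (N + m1) * ((w (N + m1))⁻¹ * g⁻¹ * w (N + m1)) * (w (N + m1))⁻¹ := by group
      _ = w (N + m1) * 1 * (w (N + m1))⁻¹ := by rw [← h2]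
      _ = 1 := by group
  exact inv_eq_one.mp h3

end StmtSix

open StmtSix in
/-- Let `G = HNN(H, H₀, θ)` with `1 < [H : H₀] < ∞`,
`1 < [H : θ(H₀)] < ∞`, `a ∈ H \ H₀` centralizing `H₀`, `b ∈ H \ θ(H₀)` centralizing
`θ(H₀)`, and `⋂_n θ⁻ⁿ(H₀⁽ⁿ⁾) = {e}` for the chain `H₀⁽⁰⁾ = H₀`,
`H₀⁽ⁿ⁺¹⁾ = H₀ ∩ θ(H₀⁽ⁿ⁾)`.  Then the end `ξ` of the Bass–Serre tree represented by the
ray through `btH, btat⁻¹H, btat⁻²H, …` (determined by `∏_{i=1}^∞ (btat⁻¹)(t⁻²)^i`) has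
trivial stabilizer: any `g ∈ G` which eventually translates this ray (by any degree
`d ≥ 0`, in either direction) is trivial. -/
theorem stmt6 {H : Type*} [Group H] (A B : Subgroup H) (φ : A ≃* B)
    (hA1 : 1 < A.index) (hAfin : A.index ≠ 0)
    (hB1 : 1 < B.index) (hBfin : B.index ≠ 0)
    (a : H) (ha : a ∉ A) (hacen : ∀ h ∈ A, a * h = h * a)
    (b : H) (hb : b ∉ B) (hbcen : ∀ h ∈ B, b * h = h * b)
    (hchain : (⋂ n : ℕ, (thetaInv φ)^[n] (hnnChain φ n)) = {1})
    (g : HNNExtension H A B φ)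
    (hstab : ∃ d N : ℕ,
      (∀ n ≥ N, g • (QuotientGroup.mk
            (rayProd (of b * t) (of a * t⁻¹) (t : HNNExtension H A B φ)⁻¹ n) :
          HNNExtension H A B φ ⧸ (of : H →* HNNExtension H A B φ).range) =
        QuotientGroup.mk
          (rayProd (of b * t) (of a * t⁻¹) (t : HNNExtension H A B φ)⁻¹ (n + d))) ∨
      (∀ n ≥ N, g • (QuotientGroup.mk
            (rayProd (of b * t) (of a * t⁻¹) (t : HNNExtension H A B φ)⁻¹ (n + d)) :
          HNNExtension H A B φ ⧸ (of : H →* HNNExtension H A B φ).range) =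
        QuotientGroup.mk
          (rayProd (of b * t) (of a * t⁻¹) (t : HNNExtension H A B φ)⁻¹ n))) :
    g = 1 := by
  obtain ⟨d, N, hcase | hcase⟩ := hstab
  · exact main_aux A B φ a hacen b hbcen hchain g d N hcase
  · have h1 : ∀ n ≥ N, g⁻¹ • (QuotientGroup.mk
            (rayProd (of b * t) (of a * t⁻¹) (t : HNNExtension H A B φ)⁻¹ n) :
          HNNExtension H A B φ ⧸ (of : H →* HNNExtension H A B φ).range) =
        QuotientGroup.mk
          (rayProd (of b * t) (of a * t⁻¹) (t : HNNExtension H A B φ)⁻¹ (n + d)) := by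
      intro n hn
      rw [eq_comm, ← smul_eq_iff_eq_inv_smul]
      exact hcase n hn
    have h2 : g⁻¹ = 1 := main_aux A B φ a hacen b hbcen hchain g⁻¹ d N h1
    exact inv_eq_one.mp h2
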